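/- Let L = (L_{ij}) be an n×n real matrix (n ≥ 2) that is quasi-positive (L_{ij} ≥ 0 whenever i ≠ j), irreducible (for every nonempty proper subset A of {1,…,n} there exist i ∉ A and j ∈ A with L_{ij} > 0), satisfies L_{ii} = −∑_{j≠i} L_{ji} for each i (every column of L sums to zero), and is line-sum symmetric (for each i, ∑_j L_{ij} = ∑_j L_{ji}). Then for every vector X ∈ ℝⁿ one has ∑_{i,j=1}^n L_{ij} X_i X_j ≤ 0, and equality holds if and only if X is a scalar multiple of the all-ones vector (i.e., X_1 = X_2 = ⋯ = X_n). -/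
import Mathlib


open Filter Topology

/-- Lemma 2.2: if `L` satisfies (A1) and is line-sum symmetric, then the quadratic form
`∑ L_{ij} X_i X_j` is nonpositive, with equality iff `X` is a multiple of the all-ones vector. -/
theorem quadratic_form_nonpos_of_line_sum_symmetric
    {n : ℕ} (hn : 2 ≤ n)
    (L : Matrix (Fin n) (Fin n) ℝ)
    (hquasi : ∀ i j, i ≠ j → 0 ≤ L i j)
    (hirr : ∀ A : Finset (Fin n), A.Nonempty → A ≠ Finset.univ →
      ∃ i ∉ A, ∃ j ∈ A, 0 < L i j)
    (hdiag : ∀ i, L i i = -∑ j ∈ Finset.univ.erase i, L j i)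
    (hlss : ∀ i, ∑ j, L i j = ∑ j, L j i) :
    ∀ X : Fin n → ℝ,
      (∑ i, ∑ j, L i j * X i * X j ≤ 0) ∧
      ((∑ i, ∑ j, L i j * X i * X j = 0) ↔ ∃ c : ℝ, ∀ i, X i = c) := by
  have hcol : ∀ i, ∑ j, L j i = 0 := by
    intro i
    rw [← Finset.add_sum_erase _ _ (Finset.mem_univ i), hdiag i]
    ring
  have hrow : ∀ i, ∑ j, L i j = 0 := fun i => (hlss i).trans (hcol i)
  intro X
  have hA : ∑ i, ∑ j, L i j * X i ^ 2 = 0 := by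
    apply Finset.sum_eq_zero; intro i _
    rw [← Finset.sum_mul, hrow i, zero_mul]
  have hC : ∑ i : Fin n, ∑ j, L i j * X j ^ 2 = 0 := by
    rw [Finset.sum_comm]
    apply Finset.sum_eq_zero; intro j _
    rw [← Finset.sum_mul, hcol j, zero_mul]
  have key : ∑ i, ∑ j, L i j * X i * X j
      = -(1/2) * ∑ i, ∑ j, L i j * (X i - X j) ^ 2 := by
    have h1 : ∑ i, ∑ j, L i j * (X i - X j) ^ 2
        = (∑ i, ∑ j, L i j * X i ^ 2)
          - 2 * (∑ i, ∑ j, L i j * X i * X j)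
          + (∑ i : Fin n, ∑ j, L i j * X j ^ 2) := by
      rw [Finset.mul_sum, ← Finset.sum_sub_distrib, ← Finset.sum_add_distrib]
      apply Finset.sum_congr rfl; intro i _
      rw [Finset.mul_sum, ← Finset.sum_sub_distrib, ← Finset.sum_add_distrib]
      apply Finset.sum_congr rfl; intro j _
      ring
    rw [h1, hA, hC]; ring
  have hterm : ∀ i j : Fin n, 0 ≤ L i j * (X i - X j) ^ 2 := by
    intro i j
    rcases eq_or_ne i j with rfl | h
    · simp
    · exact mul_nonneg (hquasi i j h) (sq_nonneg _)
  have hSnonneg : 0 ≤ ∑ i, ∑ j, L i j * (X i - X j) ^ 2 :=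
    Finset.sum_nonneg fun i _ => Finset.sum_nonneg fun j _ => hterm i j
  constructor
  · rw [key]; nlinarith
  constructor
  · intro hQ0
    have hS0 : ∑ i, ∑ j, L i j * (X i - X j) ^ 2 = 0 := by
      rw [hQ0] at key; linarith
    have hall : ∀ i j : Fin n, L i j * (X i - X j) ^ 2 = 0 := by
      intro i j
      have h1 : ∀ i ∈ Finset.univ, ∑ j, L i j * (X i - X j) ^ 2 = 0 :=
        (Finset.sum_eq_zero_iff_of_nonneg
          (fun i _ => Finset.sum_nonneg fun j _ => hterm i j)).mp hS0
      have h2 := (Finset.sum_eq_zero_iff_of_nonneg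
        (fun j _ => hterm i j)).mp (h1 i (Finset.mem_univ i))
      exact h2 j (Finset.mem_univ j)
    obtain ⟨i0⟩ : Nonempty (Fin n) := ⟨⟨0, by omega⟩⟩
    refine ⟨X i0, ?_⟩
    by_contra hcon
    push_neg at hcon
    set A : Finset (Fin n) := Finset.univ.filter (fun j => X j = X i0) with hAdef
    have hAne : A.Nonempty := ⟨i0, by simp [hAdef]⟩
    have hAnu : A ≠ Finset.univ := by
      obtain ⟨k, hk⟩ := hcon
      intro h
      have : k ∈ A := h ▸ Finset.mem_univ k
      simp [hAdef] at this
      exact hk this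
    obtain ⟨i, hiA, j, hjA, hLij⟩ := hirr A hAne hAnu
    have hXj : X j = X i0 := by simpa [hAdef] using hjA
    have := hall i j
    have hXi : X i = X j := by
      have hsq : (X i - X j) ^ 2 = 0 := by
        rcases mul_eq_zero.mp this with h | h
        · exact absurd h (ne_of_gt hLij)
        · exact h
      have := pow_eq_zero_iff (n := 2) (by norm_num) |>.mp hsq
      linarith [this]
    exact hiA (by simp [hAdef, hXi, hXj])
  · rintro ⟨c, hc⟩
    calc ∑ i, ∑ j, L i j * X i * X j = ∑ i : Fin n, ∑ j, L i j * c * c := by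
          simp [hc]
      _ = 0 := by
          apply Finset.sum_eq_zero; intro i _
          have : ∑ j, L i j * c * c = (∑ j, L i j) * c * c := by
            rw [Finset.sum_mul, Finset.sum_mul]
          rw [this, hrow i, zero_mul, zero_mul]
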